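/- Let $n \geq 1$ and $w \in Z^n(G,\mathcal{A})$ for a transitive unital partial action on the block product $\mathcal{A}$. Then $w(x_1,\dots,x_n) = \prod_{g\in\Lambda}\theta_g\big[w(g^{-1}x_1, x_2,\dots,x_n)\prod_{k=1}^{n-1}w(g^{-1},x_1,\dots,x_k x_{k+1},\dots,x_n)^{(-1)^k} w(g^{-1},x_1,\dots,x_{n-1})^{(-1)^n}\big]$. -/

import Mathlib

variable {G : Type*} [Group G]

/-- Ordered product `x₁ ⋯ x_k` of the first `k` entries of a tuple. -/
def pprodG {n : ℕ} (x : Fin n → G) (k : ℕ) : G := ((List.ofFn x).take k).prod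

/-- The tuple obtained from `(x₁,…,x_{n+1})` by multiplying the entries in positions
`i, i+1` (0-indexed). -/
def dface {n : ℕ} (i : Fin n) (x : Fin (n + 1) → G) : Fin n → G :=
  fun j => if (j : ℕ) < (i : ℕ) then x j.castSucc
    else if j = i then x i.castSucc * x i.succ
    else x j.succ

/-- A unital partial action of `G` on a commutative unital ring `A`. -/
structure UPA (G A : Type*) [Group G] [CommRing A] where
  e : G → A
  idem : ∀ g, e g * e g = e g
  e_one : e 1 = 1
  act : G → A → A
  act_one : ∀ a, act 1 a = a
  act_mem : ∀ g a, e g⁻¹ * a = a → e g * act g a = act g a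
  act_add : ∀ g a b, e g⁻¹ * a = a → e g⁻¹ * b = b → act g (a + b) = act g a + act g b
  act_mul : ∀ g a b, e g⁻¹ * a = a → e g⁻¹ * b = b → act g (a * b) = act g a * act g b
  act_e : ∀ g h, act g (e g⁻¹ * e h) = e g * e (g * h)
  act_inv : ∀ g a, e g⁻¹ * a = a → act g⁻¹ (act g a) = a
  act_comp : ∀ g h a, e h⁻¹ * e (h⁻¹ * g⁻¹) * a = a → act g (act h a) = act (g * h) a

variable {A : Type*} [CommRing A]

/-- The idempotent `1_{(x₁,…,xₙ)} = 1_{x₁} 1_{x₁x₂} ⋯ 1_{x₁⋯xₙ}`. -/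
def UPA.pe (S : UPA G A) {n : ℕ} (x : Fin n → G) : A :=
  ∏ i : Fin n, S.e (pprodG x ((i : ℕ) + 1))

/-- `w` is a partial `n`-cochain valued in the ideals `D_{(x₁,…,xₙ)}`. -/
def UPA.IsCochain (S : UPA G A) {n : ℕ} (w : (Fin n → G) → A) : Prop :=
  ∀ x, S.pe x * w x = w x

/-- `w, winv` are mutually inverse partial `n`-cochains. -/
def UPA.InvPair (S : UPA G A) {n : ℕ} (w winv : (Fin n → G) → A) : Prop :=
  S.IsCochain w ∧ S.IsCochain winv ∧ ∀ x, w x * winv x = S.pe x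

/-- `psel w winv k` is `w` for even `k` and `winv` for odd `k` (exponent `(-1)^k`). -/
def psel {n : ℕ} (w winv : (Fin n → G) → A) (k : ℕ) (y : Fin n → G) : A :=
  if Even k then w y else winv y

/-- The partial coboundary `δⁿ`, computed with a chosen ideal-inverse `winv` of `w`. -/
def UPA.pdelta (S : UPA G A) {n : ℕ} (w winv : (Fin n → G) → A)
    (x : Fin (n + 1) → G) : A :=
  S.act (x 0) (S.e (x 0)⁻¹ * w (Fin.tail x)) *
    (∏ i : Fin n, psel w winv ((i : ℕ) + 1) (dface i x)) *
    psel w winv (n + 1) (Fin.init x)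

/-- `w` (with ideal-inverse `winv`) is a partial `n`-cocycle: `δⁿ w = e_{n+1}`. -/
def UPA.IsCocyclePair (S : UPA G A) {n : ℕ} (w winv : (Fin n → G) → A) : Prop :=
  S.InvPair w winv ∧ ∀ x : Fin (n + 1) → G, S.pdelta w winv x = S.pe x

variable {Λ : Type*} [DecidableEq Λ] {R : Λ → Type*} [∀ l, CommRing (R l)]

/-- The identity of the block `A_l` viewed as an (indecomposable) idempotent of the
product ring `A = ∏ l, R l`. -/
def blk (l : Λ) : ∀ l, R l := Pi.single l 1

/-- `θ_g(a) = α_g(pr₁(a))`, where `pr₁` is the projection onto the base block `A_{l0}`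
and `g = ι l` runs over `Λ`. -/
def thetaF (S : UPA G (∀ l, R l)) (ι : Λ → G) (l0 : Λ) (l : Λ)
    (a : ∀ l, R l) : ∀ l, R l :=
  S.act (ι l) (Pi.single l0 (a l0))

section Aux

lemma pprodG_zero {m : ℕ} (x : Fin m → G) : pprodG x 0 = 1 := by simp [pprodG]

lemma pprodG_succ {m : ℕ} (x : Fin m → G) (k : ℕ) (h : k < m) :
    pprodG x (k+1) = pprodG x k * x ⟨k, h⟩ := by
  have h' : k < (List.ofFn x).length := by simpa using h
  simp only [pprodG, List.prod_take_succ _ _ h', List.get_ofFn]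
  simp

lemma pprodG_cons {m : ℕ} (a : G) (x : Fin m → G) (k : ℕ) :
    pprodG (Fin.cons a x) (k+1) = a * pprodG x k := by
  simp [pprodG, List.ofFn_succ]

lemma pprodG_init {m : ℕ} (z : Fin (m+1) → G) (k : ℕ) (hk : k ≤ m) :
    pprodG (Fin.init z) k = pprodG z k := by
  induction k with
  | zero => simp [pprodG_zero]
  | succ k ih =>
    have hk' : k < m := hk
    rw [pprodG_succ _ k hk', pprodG_succ z k (by omega), ih (by omega)]
    rfl

lemma dface_eval_lt {m : ℕ} (i : Fin (m+1)) (z : Fin (m+2) → G) (j : Fin (m+1))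
    (h : (j:ℕ) < (i:ℕ)) : dface i z j = z j.castSucc := if_pos h

lemma dface_eval_eq {m : ℕ} (i : Fin (m+1)) (z : Fin (m+2) → G) :
    dface i z i = z i.castSucc * z i.succ := by simp [dface]

lemma dface_eval_gt {m : ℕ} (i : Fin (m+1)) (z : Fin (m+2) → G) (j : Fin (m+1))
    (h : (i:ℕ) < (j:ℕ)) : dface i z j = z j.succ := by
  rw [dface, if_neg (by omega), if_neg (by rw [Fin.ext_iff]; omega)]

lemma pprodG_dface {m : ℕ} (i : Fin (m+1)) (z : Fin (m+2) → G) (k : ℕ) (hk : k ≤ m+1) :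
    pprodG (dface i z) k = if k ≤ (i:ℕ) then pprodG z k else pprodG z (k+1) := by
  induction k with
  | zero => simp [pprodG_zero]
  | succ k ih =>
    have hk' : k < m+1 := hk
    rw [pprodG_succ _ k hk', ih (by omega)]
    rcases lt_trichotomy k (i:ℕ) with h | h | h
    · rw [dface_eval_lt i z ⟨k, hk'⟩ h, if_pos (by omega), if_pos (by omega),
        pprodG_succ z k (by omega)]
      rfl
    · have he : (⟨k, hk'⟩ : Fin (m+1)) = i := by ext; exact h
      rw [he, dface_eval_eq i z, if_pos (by omega), if_neg (by omega),
        pprodG_succ z (k+1) (by omega), pprodG_succ z k (by omega), mul_assoc]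
      have h1 : i.castSucc = (⟨k, by omega⟩ : Fin (m+2)) := by ext; simp [← he]
      have h2 : i.succ = (⟨k+1, by omega⟩ : Fin (m+2)) := by ext; simp [← he]
      rw [h1, h2]
    · rw [dface_eval_gt i z ⟨k, hk'⟩ h, if_neg (by omega), if_neg (by omega),
        pprodG_succ z (k+1) (by omega)]
      rfl

variable {B : Type*} [CommRing B]

lemma prod_absorb {ι : Type*} (s : Finset ι) (f : ι → B) (u : B)
    (h : ∀ i ∈ s, f i * u = u) : (∏ i ∈ s, f i) * u = u :=
  Finset.prod_induction f (fun z => z * u = u)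
    (fun a b ha hb => by rw [mul_assoc, hb, ha]) (one_mul u) h

lemma pe_factor' (S : UPA G B) {m : ℕ} (z : Fin m → G) (k : ℕ) (h1 : 1 ≤ k) (h2 : k ≤ m) :
    S.e (pprodG z k) * S.pe z = S.pe z := by
  have hlt : k - 1 < m := by omega
  have hj : (⟨k-1, hlt⟩ : Fin m) ∈ (Finset.univ : Finset (Fin m)) := Finset.mem_univ _
  have he : S.e (pprodG z (((⟨k-1, hlt⟩ : Fin m) : ℕ)+1)) = S.e (pprodG z k) := by
    have hv : ((⟨k-1, hlt⟩ : Fin m) : ℕ) = k - 1 := rfl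
    rw [hv, Nat.sub_add_cancel h1]
  rw [UPA.pe, ← Finset.mul_prod_erase _ _ hj, he, ← mul_assoc, S.idem]

lemma cochain_factor' (S : UPA G B) {m : ℕ} {v : (Fin m → G) → B} (hv : S.IsCochain v)
    (z : Fin m → G) (k : ℕ) (h1 : 1 ≤ k) (h2 : k ≤ m) :
    S.e (pprodG z k) * v z = v z := by
  conv_lhs => rw [← hv z]
  rw [← mul_assoc, pe_factor' S z k h1 h2, hv z]

lemma psel_cochain (S : UPA G B) {m : ℕ} {w winv : (Fin m → G) → B}
    (hw : S.InvPair w winv) (k : ℕ) : S.IsCochain (psel w winv k) := by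
  intro z
  unfold psel
  split
  · exact hw.1 z
  · exact hw.2.1 z

lemma psel_mul (S : UPA G B) {m : ℕ} {w winv : (Fin m → G) → B}
    (hw : S.InvPair w winv) (k : ℕ) (z : Fin m → G) :
    psel w winv k z * psel w winv (k+1) z = S.pe z := by
  unfold psel
  rcases Nat.even_or_odd k with h | h
  · rw [if_pos h, if_neg (by simp [Nat.even_add_one, h])]
    exact hw.2.2 z
  · rw [if_neg (Nat.not_even_iff_odd.mpr h),
      if_pos (Nat.even_add_one.mpr (Nat.not_even_iff_odd.mpr h))]
    rw [mul_comm]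
    exact hw.2.2 z

lemma absorb_act (S : UPA G B) (g h : G) (a : B)
    (ha : S.e g⁻¹ * a = a) (hh : S.e h * a = a) :
    S.e (g * h) * S.act g a = S.act g a := by
  have h1 : (S.e g⁻¹ * S.e h) * a = a := by rw [mul_assoc, hh, ha]
  have h2 : S.e g⁻¹ * (S.e g⁻¹ * S.e h) = S.e g⁻¹ * S.e h := by rw [← mul_assoc, S.idem]
  have key : S.act g a = (S.e g * S.e (g*h)) * S.act g a := by
    conv_lhs => rw [← h1]
    rw [S.act_mul g _ a h2 ha, S.act_e]
  conv_lhs => rw [key]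
  rw [show S.e (g*h) * ((S.e g * S.e (g*h)) * S.act g a)
      = (S.e (g*h) * S.e (g*h)) * (S.e g * S.act g a) from by ring, S.idem,
    show S.e (g*h) * (S.e g * S.act g a) = (S.e g * S.e (g*h)) * S.act g a from by ring,
    ← key]

lemma main_aux (S : UPA G B) (n : ℕ)
    (w winv : (Fin (n+1) → G) → B) (hw : S.IsCocyclePair w winv)
    (y₀ : G) (x : Fin (n+1) → G) :
    w (dface 0 (Fin.cons y₀ x : Fin (n + 2) → G)) *
      (∏ i : Fin n, psel w winv ((i : ℕ) + 1)
        (dface i.succ (Fin.cons y₀ x : Fin (n + 2) → G))) *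
      psel w winv (n + 1) (Fin.init (Fin.cons y₀ x : Fin (n + 2) → G)) =
    S.act y₀ (S.e y₀⁻¹ * w x) := by
  obtain ⟨hpair, hcoc⟩ := hw
  obtain ⟨hcw, hcwi, hmul⟩ := hpair
  set y : Fin (n+2) → G := Fin.cons y₀ x with hy
  set u : B := S.act y₀ (S.e y₀⁻¹ * w x) with hu
  have ha : S.e y₀⁻¹ * (S.e y₀⁻¹ * w x) = S.e y₀⁻¹ * w x := by rw [← mul_assoc, S.idem]
  have hew : ∀ k : ℕ, k ≤ n+1 → S.e (pprodG x k) * w x = w x := by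
    intro k hk
    match k with
    | 0 => rw [pprodG_zero, S.e_one, one_mul]
    | (j+1) => exact cochain_factor' S hcw x (j+1) (by omega) hk
  have hL1 : ∀ k : ℕ, k ≤ n+1 → S.e (pprodG y (k+1)) * u = u := by
    intro k hk
    rw [hy, pprodG_cons, hu]
    refine absorb_act S y₀ (pprodG x k) _ ha ?_
    rw [show S.e (pprodG x k) * (S.e y₀⁻¹ * w x)
        = S.e y₀⁻¹ * (S.e (pprodG x k) * w x) from by ring, hew k hk]
  have hface_u : ∀ i : Fin (n+1), S.pe (dface i y) * u = u := by
    intro i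
    rw [UPA.pe]
    refine prod_absorb _ _ _ (fun k _ => ?_)
    rw [pprodG_dface i y ((k:ℕ)+1) k.isLt]
    split
    · exact hL1 (k:ℕ) (le_of_lt k.isLt)
    · exact hL1 ((k:ℕ)+1) k.isLt
  have hinit_u : S.pe (Fin.init y) * u = u := by
    rw [UPA.pe]
    refine prod_absorb _ _ _ (fun k _ => ?_)
    rw [pprodG_init y ((k:ℕ)+1) k.isLt]
    exact hL1 (k:ℕ) (le_of_lt k.isLt)
  set Wd := w (dface 0 y) with hWd
  set P1 := ∏ i : Fin n, psel w winv ((i:ℕ)+1) (dface i.succ y) with hP1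
  set L := psel w winv (n+1) (Fin.init y) with hL
  have hpe_stuff : S.pe y * (Wd * P1 * L) = Wd * P1 * L := by
    rw [UPA.pe]
    refine prod_absorb _ _ _ (fun j _ => ?_)
    by_cases hj : (j:ℕ) ≤ n
    · have h1 : S.e (pprodG y ((j:ℕ)+1)) * L = L := by
        rw [hL, ← pprodG_init y ((j:ℕ)+1) (by omega)]
        exact cochain_factor' S (psel_cochain S ⟨hcw, hcwi, hmul⟩ (n+1)) (Fin.init y)
          ((j:ℕ)+1) (by omega) (by omega)
      rw [show S.e (pprodG y ((j:ℕ)+1)) * (Wd * P1 * L)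
          = Wd * P1 * (S.e (pprodG y ((j:ℕ)+1)) * L) from by ring, h1]
    · have hj' : (j:ℕ) = n+1 := by omega
      have h2 := cochain_factor' S hcw (dface 0 y) (n+1) (by omega) (by omega)
      rw [pprodG_dface 0 y (n+1) (by omega), if_neg (by simp), ← hWd] at h2
      rw [show S.e (pprodG y ((j:ℕ)+1)) * (Wd * P1 * L)
          = (S.e (pprodG y ((j:ℕ)+1)) * Wd) * (P1 * L) from by ring, hj', h2, mul_assoc]
  have hc := hcoc y
  rw [UPA.pdelta] at hc
  rw [show y 0 = y₀ from rfl, show Fin.tail y = x from rfl, ← hu, Fin.prod_univ_succ] at hc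
  simp only [Fin.val_succ, Fin.val_zero, zero_add] at hc
  -- hc : u * (psel w winv 1 (dface 0 y) * ∏ i : Fin n, psel w winv (↑i+1+1) (dface i.succ y))
  --        * psel w winv (n+1+1) (Fin.init y) = S.pe y
  have hWQ : Wd * psel w winv 1 (dface 0 y) = S.pe (dface 0 y) := by
    rw [hWd, show w (dface 0 y) = psel w winv 0 (dface 0 y) from by simp [psel]]
    simpa using psel_mul S ⟨hcw, hcwi, hmul⟩ 0 (dface 0 y)
  have hP12 : P1 * (∏ i : Fin n, psel w winv ((i:ℕ)+1+1) (dface i.succ y))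
      = ∏ i : Fin n, S.pe (dface i.succ y) := by
    rw [hP1, ← Finset.prod_mul_distrib]
    exact Finset.prod_congr rfl (fun i _ => psel_mul S ⟨hcw, hcwi, hmul⟩ ((i:ℕ)+1) _)
  have hLQ : L * psel w winv (n+1+1) (Fin.init y) = S.pe (Fin.init y) := by
    rw [hL]
    exact psel_mul S ⟨hcw, hcwi, hmul⟩ (n+1) (Fin.init y)
  have hE_u : (S.pe (dface 0 y) * (∏ i : Fin n, S.pe (dface i.succ y)) * S.pe (Fin.init y))
      * u = u := by
    have hP : (∏ i : Fin n, S.pe (dface i.succ y)) * u = u :=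
      prod_absorb _ _ _ (fun i _ => hface_u i.succ)
    rw [mul_assoc, mul_assoc, hinit_u, hP, hface_u 0]
  have h5 : (Wd * P1 * L) * ((psel w winv 1 (dface 0 y)
        * ∏ i : Fin n, psel w winv ((i:ℕ)+1+1) (dface i.succ y))
        * psel w winv (n+1+1) (Fin.init y))
      = S.pe (dface 0 y) * (∏ i : Fin n, S.pe (dface i.succ y)) * S.pe (Fin.init y) := by
    rw [show (Wd * P1 * L) * ((psel w winv 1 (dface 0 y)
          * ∏ i : Fin n, psel w winv ((i:ℕ)+1+1) (dface i.succ y))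
          * psel w winv (n+1+1) (Fin.init y))
        = (Wd * psel w winv 1 (dface 0 y))
          * (P1 * ∏ i : Fin n, psel w winv ((i:ℕ)+1+1) (dface i.succ y))
          * (L * psel w winv (n+1+1) (Fin.init y)) from by ring, hWQ, hP12, hLQ]
  have final : u = Wd * P1 * L := by
    calc u = (S.pe (dface 0 y) * (∏ i : Fin n, S.pe (dface i.succ y)) * S.pe (Fin.init y))
          * u := hE_u.symm
      _ = ((Wd * P1 * L) * ((psel w winv 1 (dface 0 y)
            * ∏ i : Fin n, psel w winv ((i:ℕ)+1+1) (dface i.succ y))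
            * psel w winv (n+1+1) (Fin.init y))) * u := by rw [h5]
      _ = (Wd * P1 * L) * (u * (psel w winv 1 (dface 0 y)
            * ∏ i : Fin n, psel w winv ((i:ℕ)+1+1) (dface i.succ y))
            * psel w winv (n+1+1) (Fin.init y)) := by ring
      _ = (Wd * P1 * L) * S.pe y := by rw [hc]
      _ = S.pe y * (Wd * P1 * L) := mul_comm _ _
      _ = Wd * P1 * L := hpe_stuff
  exact final.symm

lemma single_mul_eq {Λ : Type*} [DecidableEq Λ] {R : Λ → Type*} [∀ l, CommRing (R l)]
    (μ : Λ) (a : ∀ l, R l) :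
    (Pi.single μ 1 : ∀ l, R l) * a = Pi.single μ (a μ) := by
  funext l
  rcases eq_or_ne l μ with h | h
  · subst h; simp
  · simp [Pi.single_eq_of_ne h]

end Aux

/-- (Lemma `w = ∏_g θ_g[…]`, for `n = N + 1 ≥ 1`.)  For a transitive unital partial action
on the block product `A = ∏_{λ∈Λ} A_λ` and a partial `n`-cocycle `w ∈ Zⁿ(G, A)` (with
ideal-inverse `winv`):
`w(x₁,…,xₙ) = ∏_{g∈Λ} θ_g[ w(g⁻¹x₁,x₂,…,xₙ) ·
∏_{k=1}^{n-1} w(g⁻¹,x₁,…,x_k x_{k+1},…,xₙ)^{(-1)^k} · w(g⁻¹,x₁,…,x_{n-1})^{(-1)^n} ]`,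
read componentwise: the `μ`-component of `w x` is the `μ`-component of the `θ_μ`-term
(`pr_μ (w x) = θ_μ(⋯)` as elements of `A`). -/
theorem stmt15 [∀ l, Nontrivial (R l)]
    (hind : ∀ (l : Λ) (y : R l), y * y = y → y = 0 ∨ y = 1)
    (S : UPA G (∀ l, R l)) (l0 : Λ)
    (ι : Λ → G) (hι_inj : Function.Injective ι)
    (hι_dom : ∀ l, S.e (ι l)⁻¹ * blk l0 = blk l0)
    (hι_act : ∀ l, S.act (ι l) (blk l0) = blk l)
    (hι₀ : ι l0 = 1)
    (n : ℕ) (w winv : (Fin (n + 1) → G) → (∀ l, R l))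
    (hw : S.IsCocyclePair w winv) :
    ∀ (x : Fin (n + 1) → G) (μ : Λ),
      Pi.single μ (w x μ) =
        thetaF S ι l0 μ
          (w (dface 0 (Fin.cons (ι μ)⁻¹ x : Fin (n + 2) → G)) *
           (∏ i : Fin n, psel w winv ((i : ℕ) + 1)
              (dface i.succ (Fin.cons (ι μ)⁻¹ x : Fin (n + 2) → G))) *
           psel w winv (n + 1) (Fin.init (Fin.cons (ι μ)⁻¹ x : Fin (n + 2) → G))) := by
  intro x μ
  have haux := main_aux S n w winv hw (ι μ)⁻¹ x
  rw [haux, thetaF]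
  set u : ∀ l, R l := S.act (ι μ)⁻¹ (S.e ((ι μ)⁻¹)⁻¹ * w x) with hu
  have hinv2 : ((ι μ)⁻¹)⁻¹ = ι μ := inv_inv _
  have hegμ : S.e (ι μ) * blk μ = blk μ := by
    rw [← hι_act μ]
    exact S.act_mem (ι μ) (blk l0) (hι_dom μ)
  have hsingleμ : (Pi.single μ (w x μ) : ∀ l, R l) = blk μ * w x := by
    rw [blk, single_mul_eq]
  have ha : S.e ((ι μ)⁻¹)⁻¹ * (S.e ((ι μ)⁻¹)⁻¹ * w x) = S.e ((ι μ)⁻¹)⁻¹ * w x := by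
    rw [← mul_assoc, S.idem]
  have hblkdom : S.e ((ι μ)⁻¹)⁻¹ * blk μ = blk μ := by rw [hinv2]; exact hegμ
  have hactblk : S.act (ι μ)⁻¹ (blk μ) = blk l0 := by
    rw [← hι_act μ]
    exact S.act_inv (ι μ) (blk l0) (hι_dom μ)
  have hstep : S.act (ι μ)⁻¹ (Pi.single μ (w x μ)) = Pi.single l0 (u l0) := by
    calc S.act (ι μ)⁻¹ (Pi.single μ (w x μ))
        = S.act (ι μ)⁻¹ (blk μ * (S.e ((ι μ)⁻¹)⁻¹ * w x)) := by
          rw [hsingleμ, hinv2]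
          congr 1
          rw [show blk μ * (S.e (ι μ) * w x) = (S.e (ι μ) * blk μ) * w x from by ring, hegμ]
      _ = S.act (ι μ)⁻¹ (blk μ) * u := S.act_mul (ι μ)⁻¹ (blk μ) _ hblkdom ha
      _ = blk l0 * u := by rw [hactblk]
      _ = Pi.single l0 (u l0) := by rw [blk, single_mul_eq]
  have hconda : S.e ((ι μ)⁻¹)⁻¹ * Pi.single μ (w x μ) = Pi.single μ (w x μ) := by
    rw [hinv2, hsingleμ,
      show S.e (ι μ) * (blk μ * w x) = (S.e (ι μ) * blk μ) * w x from by ring, hegμ]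
  rw [← hstep]
  have hfin := S.act_inv (ι μ)⁻¹ (Pi.single μ (w x μ)) hconda
  rw [hinv2] at hfin
  exact hfin.symm
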